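/- For p ∈ [1,2) and Θ_p = {θ ∈ (0,∞)^d : Σ_i θ_i^{p/(2-p)} ≤ 1}, the Θ_p-norm equals the ℓ_p norm: sqrt(inf_{θ∈Θ_p} Σ_i w_i²/θ_i) = (Σ_i |w_i|^p)^{1/p} for all w ∈ R^d. -/

import Mathlib

noncomputable def thetaNorm {d : ℕ} (Θ : Set (Fin d → ℝ)) (w : Fin d → ℝ) : ℝ :=
  Real.sqrt (⨅ θ : Θ, ∑ i, w i ^ 2 / (θ : Fin d → ℝ) i)

theorem theta_norm_eq_lp {d : ℕ} (p : ℝ) (hp1 : 1 ≤ p) (hp2 : p < 2) (w : Fin d → ℝ) :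
    thetaNorm {θ : Fin d → ℝ | (∀ i, 0 < θ i) ∧ ∑ i, θ i ^ (p / (2 - p)) ≤ 1} w =
      (∑ i, |w i| ^ p) ^ (1 / p) := by
  have hp0 : (0:ℝ) < p := lt_of_lt_of_le one_pos hp1
  have h2p : (0:ℝ) < 2 - p := by linarith
  unfold thetaNorm
  simp_rw [show ∀ i, w i ^ 2 = |w i| ^ 2 from fun i => (sq_abs (w i)).symm]
  set q : ℝ := p / (2 - p) with hqdef
  have hq0 : 0 < q := div_pos hp0 h2p
  set Θ : Set (Fin d → ℝ) := {θ : Fin d → ℝ | (∀ i, 0 < θ i) ∧ ∑ i, θ i ^ q ≤ 1} with hΘ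
  set S : ℝ := ∑ i, |w i| ^ p with hS
  have hS0 : 0 ≤ S := Finset.sum_nonneg fun i _ => Real.rpow_nonneg (abs_nonneg _) _
  set T : ℝ := S ^ (2 / p) with hT
  -- Lower bound via Hölder
  have lower : ∀ θ ∈ Θ, T ≤ ∑ i, |w i| ^ 2 / θ i := by
    rintro θ ⟨hθpos, hθsum⟩
    have hF0 : 0 ≤ ∑ i, |w i| ^ 2 / θ i :=
      Finset.sum_nonneg fun i _ => div_nonneg (sq_nonneg _) (hθpos i).le
    have hconj : Real.HolderConjugate (2/p) (2/(2-p)) := by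
      rw [Real.holderConjugate_iff]; constructor
      · exact (one_lt_div hp0).mpr hp2
      · rw [inv_div, inv_div]; ring
    have key : S ≤ (∑ i, |w i| ^ 2 / θ i) ^ (p/2) := by
      have hH := Real.inner_le_Lp_mul_Lq_of_nonneg Finset.univ
        (f := fun i => (|w i| ^ 2 / θ i) ^ (p/2)) (g := fun i => θ i ^ (p/2)) hconj
        (fun i _ => Real.rpow_nonneg (div_nonneg (sq_nonneg _) (hθpos i).le) _)
        (fun i _ => Real.rpow_nonneg (hθpos i).le _)
      have e1 : ∀ i : Fin d, (|w i| ^ 2 / θ i) ^ (p/2) * θ i ^ (p/2) = |w i| ^ p := by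
        intro i
        rw [← Real.mul_rpow (div_nonneg (sq_nonneg _) (hθpos i).le) (hθpos i).le,
          div_mul_cancel₀ _ (hθpos i).ne', ← Real.rpow_natCast |w i| 2,
          ← Real.rpow_mul (abs_nonneg _)]
        norm_num
        congr 1
        ring
      have e2 : ∀ i : Fin d, ((|w i| ^ 2 / θ i) ^ (p/2)) ^ (2/p) = |w i| ^ 2 / θ i := by
        intro i
        rw [← Real.rpow_mul (div_nonneg (sq_nonneg _) (hθpos i).le),
          show (p/2) * (2/p) = 1 by field_simp, Real.rpow_one]
      have e3 : ∀ i : Fin d, (θ i ^ (p/2)) ^ (2/(2-p)) = θ i ^ q := by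
        intro i
        rw [← Real.rpow_mul (hθpos i).le]
        congr 1
        rw [hqdef]; ring
      simp_rw [e1, e2, e3] at hH
      calc S ≤ (∑ i, |w i| ^ 2 / θ i) ^ (1/(2/p)) * (∑ i, θ i ^ q) ^ (1/(2/(2-p))) := hH
        _ ≤ (∑ i, |w i| ^ 2 / θ i) ^ (1/(2/p)) * 1 :=
            mul_le_mul_of_nonneg_left
              (Real.rpow_le_one (Finset.sum_nonneg fun i _ =>
                Real.rpow_nonneg (hθpos i).le _) hθsum (by positivity))
              (Real.rpow_nonneg hF0 _)
        _ = (∑ i, |w i| ^ 2 / θ i) ^ (p/2) := by rw [mul_one, one_div_div]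
    calc T ≤ ((∑ i, |w i| ^ 2 / θ i) ^ (p/2)) ^ (2/p) :=
          Real.rpow_le_rpow hS0 key (by positivity)
      _ = ∑ i, |w i| ^ 2 / θ i := by
          rw [← Real.rpow_mul hF0, show (p/2) * (2/p) = 1 by field_simp, Real.rpow_one]
  -- Upper bound: near-optimal θ
  have upper : ∀ ε : ℝ, 0 < ε → ∃ θ ∈ Θ,
      ∑ i, |w i| ^ 2 / θ i ≤ (∑ i, (max |w i| ε) ^ p) ^ (2/p) := by
    intro ε hε
    set v : Fin d → ℝ := fun i => max |w i| ε with hv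
    have hvpos : ∀ i, 0 < v i := fun i => lt_of_lt_of_le hε (le_max_right _ _)
    set Sv : ℝ := ∑ i, v i ^ p with hSv
    have hSv0 : 0 ≤ Sv := Finset.sum_nonneg fun i _ => Real.rpow_nonneg (hvpos i).le _
    have hSvpos : ∀ _ : Fin d, 0 < Sv := fun i =>
      lt_of_lt_of_le (Real.rpow_pos_of_pos (hvpos i) p)
        (Finset.single_le_sum (fun j _ => Real.rpow_nonneg (hvpos j).le p) (Finset.mem_univ i))
    refine ⟨fun i => v i ^ (2-p) / Sv ^ ((2-p)/p), ⟨?_, ?_⟩, ?_⟩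
    · intro i
      exact div_pos (Real.rpow_pos_of_pos (hvpos i) _) (Real.rpow_pos_of_pos (hSvpos i) _)
    · have e : ∀ i : Fin d, (v i ^ (2-p) / Sv ^ ((2-p)/p)) ^ q = v i ^ p / Sv := by
        intro i
        rw [Real.div_rpow (Real.rpow_nonneg (hvpos i).le _) (Real.rpow_nonneg hSv0 _),
          ← Real.rpow_mul (hvpos i).le, ← Real.rpow_mul hSv0,
          show (2-p) * q = p by rw [hqdef]; field_simp,
          show ((2-p)/p) * q = 1 by rw [hqdef]; field_simp, Real.rpow_one]
      rw [Finset.sum_congr rfl (fun i _ => e i), ← Finset.sum_div, ← hSv]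
      exact div_self_le_one Sv
    · calc ∑ i, |w i| ^ 2 / (v i ^ (2-p) / Sv ^ ((2-p)/p))
          ≤ ∑ i, v i ^ 2 / (v i ^ (2-p) / Sv ^ ((2-p)/p)) := by
            gcongr with i hi
            exact le_max_left _ _
        _ = ∑ i, v i ^ p * Sv ^ ((2-p)/p) := by
            refine Finset.sum_congr rfl fun i _ => ?_
            rw [div_div_eq_mul_div, mul_comm, mul_div_assoc, ← Real.rpow_natCast (v i) 2,
              ← Real.rpow_sub (hvpos i), show ((2:ℕ):ℝ) - (2-p) = p by norm_num]
            exact mul_comm _ _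
        _ = Sv * Sv ^ ((2-p)/p) := by rw [← Finset.sum_mul, ← hSv]
        _ = Sv ^ (2/p) := by
            rw [show (2:ℝ)/p = 1 + (2-p)/p by field_simp; ring, Real.rpow_add' hSv0 (by positivity),
              Real.rpow_one]
  -- Assemble
  have hΘne : Θ.Nonempty := by
    obtain ⟨θ, hθ, -⟩ := upper 1 one_pos
    exact ⟨θ, hθ⟩
  haveI : Nonempty Θ := hΘne.to_subtype
  have hbdd : BddBelow (Set.range fun θ : Θ => ∑ i, |w i| ^ 2 / (θ : Fin d → ℝ) i) := by
    refine ⟨T, ?_⟩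
    rintro x ⟨θ, rfl⟩
    exact lower θ θ.2
  have hinf : (⨅ θ : Θ, ∑ i, |w i| ^ 2 / (θ : Fin d → ℝ) i) = T := by
    refine le_antisymm ?_ (le_ciInf fun θ => lower θ θ.2)
    have tend1 : Filter.Tendsto (fun ε : ℝ => ∑ i, (max |w i| ε) ^ p)
        (nhdsWithin 0 (Set.Ioi 0)) (nhds S) := by
      rw [hS]
      refine tendsto_finset_sum _ fun i _ => ?_
      have h1 : Filter.Tendsto (fun ε : ℝ => max |w i| ε) (nhdsWithin 0 (Set.Ioi 0))
          (nhds |w i|) := by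
        have hc : Continuous fun ε : ℝ => max |w i| ε := by fun_prop
        have := (hc.tendsto (0:ℝ)).mono_left (nhdsWithin_le_nhds (s := Set.Ioi (0:ℝ)))
        simpa [max_eq_left (abs_nonneg (w i))] using this
      exact (Real.continuousAt_rpow_const |w i| p (Or.inr hp0.le)).tendsto.comp h1
    have tend2 : Filter.Tendsto (fun ε : ℝ => (∑ i, (max |w i| ε) ^ p) ^ (2/p))
        (nhdsWithin 0 (Set.Ioi 0)) (nhds T) := by
      rw [hT]
      exact (Real.continuousAt_rpow_const S (2/p) (Or.inr (by positivity))).tendsto.comp tend1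
    refine ge_of_tendsto tend2 ?_
    filter_upwards [self_mem_nhdsWithin] with ε hε
    obtain ⟨θ, hθ, hb⟩ := upper ε hε
    exact ciInf_le_of_le hbdd ⟨θ, hθ⟩ hb
  rw [hinf, hT, Real.sqrt_eq_rpow, ← Real.rpow_mul hS0,
    show (2/p) * (1/2) = 1/p by ring]
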